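/- Let G = (V,E) be a finite simple graph, let t > 0 and β > 0 be real numbers with 2β/t ≤ 1, and suppose μ is a finitely supported probability distribution over partitions of V such that every partition in the support of μ is weakly t-bounded (every part has weak diameter at most t), and for every vertex z ∈ V the probability under μ that B_2(z) ⊆ P(z) is at least 1 − 2β/t, where P(z) denotes the part of the sampled partition P containing z. Then G has a (t, 2β/t)-Two-Separated partition. -/

import Mathlib

open scoped Classical

open SimpleGraph

variable {V : Type*}

/-- The ball of radius `j` (w.r.t. the shortest-path distance in `G`) around `v`. -/
def sball (G : SimpleGraph V) (v : V) (j : ℕ) : Set V := {u | G.edist v u ≤ (j : ℕ∞)}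

/-- The shortest-path distance from `u` to `x` is finite and at most the real number `t`. -/
def edistLE (G : SimpleGraph V) (u x : V) (t : ℝ) : Prop :=
  ∃ m : ℕ, G.edist u x = (m : ℕ∞) ∧ (m : ℝ) ≤ t

/-- A `(t,ε)`-Two-Separated partition of `G`, with a real diameter bound `t`. -/
def IsTSPartitionR (G : SimpleGraph V) (t : ℝ) (ε : ℝ) (𝒞 : Set (Set V)) (X : Set V) : Prop :=
  Setoid.IsPartition 𝒞 ∧
  (∀ C ∈ 𝒞, ∀ D ∈ 𝒞, C ≠ D → ∀ a b : V, a ∈ C \ X → b ∈ D \ X →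
    ∀ w : G.Walk a b, ∃ i : ℕ, i < w.length ∧ w.getVert i ∈ X ∧ w.getVert (i + 1) ∈ X) ∧
  (∀ C ∈ 𝒞, ∀ u ∈ C, ∀ x ∈ C, edistLE G u x t) ∧
  (∀ C ∈ 𝒞, ((C ∩ X).ncard : ℝ) ≤ ε * (C.ncard : ℝ))

namespace TSaux

/-- union of the sets after position `n` in the list -/
def restAfter (L : List (Set V)) (n : ℕ) : Set V := {v | ∃ C ∈ L.drop (n + 1), v ∈ C}

/-- 2-annulus of the `n`-th cluster towards the later clusters -/
def ann (G : SimpleGraph V) (L : List (Set V)) (n : ℕ) : Set V :=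
  {v | v ∈ L.getD n ∅ ∧ ∃ u ∈ restAfter L n, G.edist v u ≤ 2}

def Xset (G : SimpleGraph V) (L : List (Set V)) : Set V := {v | ∃ n, v ∈ ann G L n}

lemma ann_subset (G : SimpleGraph V) (L : List (Set V)) (n : ℕ) :
    ann G L n ⊆ L.getD n ∅ := fun _ hv => hv.1

lemma restAfter_mono (L : List (Set V)) {p j : ℕ} (h : p ≤ j) :
    restAfter L j ⊆ restAfter L p := by
  intro v hv
  obtain ⟨C, hC, hvC⟩ := hv
  refine ⟨C, ?_, hvC⟩
  have : L.drop (j+1) = List.drop ((j+1)-(p+1)) (L.drop (p+1)) := by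
    rw [List.drop_drop]; congr 1; omega
  rw [this] at hC
  exact List.drop_subset _ _ hC

lemma mem_getD_of_lt (L : List (Set V)) {p : ℕ} (hp : p < L.length) :
    L.getD p ∅ = L.get ⟨p, hp⟩ := by
  simp [List.getD_eq_getElem?_getD, List.getElem?_eq_getElem hp]

/-- if `v` is covered, not in `restAfter L j`, and within distance 2 of `restAfter L j`,
then `v ∈ Xset`. -/
lemma mem_X_of (G : SimpleGraph V) (L : List (Set V)) {j : ℕ} {v : V}
    (hcov : ∃ C ∈ L, v ∈ C)
    (hvS : v ∉ restAfter L j) (h2 : ∃ u ∈ restAfter L j, G.edist v u ≤ 2) :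
    v ∈ Xset G L := by
  obtain ⟨C, hCL, hvC⟩ := hcov
  obtain ⟨p, hp, rfl⟩ := List.mem_iff_get.mp hCL
  have hpj : (p : ℕ) ≤ j := by
    by_contra hgt
    push_neg at hgt
    exact hvS ⟨L.get p, by
      have hlen : (p:ℕ) - (j+1) < (L.drop (j+1)).length := by
        simp only [List.length_drop]; omega
      have heq : (L.drop (j+1))[(p:ℕ)-(j+1)]'hlen = L[(j+1) + ((p:ℕ)-(j+1))]'(by omega) := by
        simp
      have hmem : (L.drop (j+1))[(p:ℕ)-(j+1)]'hlen ∈ L.drop (j+1) :=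
        List.getElem_mem hlen
      rw [heq] at hmem
      have : L.get p ∈ L.drop (j+1) := by
        simp only [List.get_eq_getElem]
        convert hmem using 2
        omega
      exact this, hvC⟩
  refine ⟨p, ?_, ?_⟩
  · rw [mem_getD_of_lt L p.isLt]; exact hvC
  · obtain ⟨u, hu, hdu⟩ := h2
    exact ⟨u, restAfter_mono L hpj hu, hdu⟩


/-- Key walk lemma: a walk from an un-marked vertex of cluster `j` to a vertex of
`restAfter L j` must contain two consecutive vertices of `Xset`. -/
lemma walk_hits (G : SimpleGraph V) (L : List (Set V))
    (hcov : ∀ x : V, ∃ C ∈ L, x ∈ C) {j : ℕ} {a b : V}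
    (haj : a ∈ L.getD j ∅) (haX : a ∉ Xset G L) (hb : b ∈ restAfter L j)
    (w : G.Walk a b) :
    ∃ i : ℕ, i < w.length ∧ w.getVert i ∈ Xset G L ∧ w.getVert (i + 1) ∈ Xset G L := by
  set S := restAfter L j with hS
  have hQlen : ∃ u ∈ S, G.edist (w.getVert w.length) u ≤ 1 := by
    refine ⟨b, hb, ?_⟩
    rw [w.getVert_length]
    simp
  have hEx : ∃ n : ℕ, ∃ u ∈ S, G.edist (w.getVert n) u ≤ 1 := ⟨w.length, hQlen⟩
  classical
  have hτspec : ∃ u ∈ S, G.edist (w.getVert (Nat.find hEx)) u ≤ 1 := Nat.find_spec hEx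
  have hτle : Nat.find hEx ≤ w.length := Nat.find_min' hEx hQlen
  have hτ0 : Nat.find hEx ≠ 0 := by
    intro h0
    apply haX
    rw [h0] at hτspec
    rw [w.getVert_zero] at hτspec
    obtain ⟨u, hu, hdu⟩ := hτspec
    exact ⟨j, haj, u, hu, le_trans hdu (by norm_num)⟩
  obtain ⟨i, hieq⟩ : ∃ i, Nat.find hEx = i + 1 := ⟨Nat.find hEx - 1, by omega⟩
  rw [hieq] at hτspec hτle
  have hilt : i < w.length := by omega
  have hnQ : ¬ ∃ u ∈ S, G.edist (w.getVert i) u ≤ 1 := Nat.find_min hEx (by omega)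
  have hadj : G.Adj (w.getVert i) (w.getVert (i+1)) := w.adj_getVert_succ hilt
  have hedge : G.edist (w.getVert i) (w.getVert (i+1)) ≤ 1 := by
    rw [edist_eq_one_iff_adj.mpr hadj]
  -- the later vertex is not in S
  have hu'S : w.getVert (i+1) ∉ S := by
    intro hmem
    exact hnQ ⟨w.getVert (i+1), hmem, hedge⟩
  have huS : w.getVert i ∉ S := by
    intro hmem
    exact hnQ ⟨w.getVert i, hmem, by simp⟩
  obtain ⟨u0, hu0S, hu0d⟩ := hτspec
  have h2u : ∃ u ∈ S, G.edist (w.getVert i) u ≤ 2 := by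
    refine ⟨u0, hu0S, ?_⟩
    calc G.edist (w.getVert i) u0
        ≤ G.edist (w.getVert i) (w.getVert (i+1)) + G.edist (w.getVert (i+1)) u0 :=
          SimpleGraph.edist_triangle
      _ ≤ 1 + 1 := add_le_add hedge hu0d
      _ = 2 := by norm_num
  have h2u' : ∃ u ∈ S, G.edist (w.getVert (i+1)) u ≤ 2 :=
    ⟨u0, hu0S, le_trans hu0d (by norm_num)⟩
  exact ⟨i, hilt, mem_X_of G L (hcov _) huS h2u, mem_X_of G L (hcov _) hu'S h2u'⟩


lemma get_mem_drop (L : List (Set V)) {j k : ℕ} (h : j < k) (hk : k < L.length) :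
    L.get ⟨k, hk⟩ ∈ L.drop (j + 1) := by
  have hlen : k - (j+1) < (L.drop (j+1)).length := by
    simp only [List.length_drop]; omega
  have heq : (L.drop (j+1))[k-(j+1)]'hlen = L[(j+1) + (k-(j+1))]'(by omega) := by simp
  have hmem : (L.drop (j+1))[k-(j+1)]'hlen ∈ L.drop (j+1) := List.getElem_mem hlen
  rw [heq] at hmem
  simp only [List.get_eq_getElem]
  convert hmem using 2
  omega

variable (G : SimpleGraph V)

structure GoodList (t ε : ℝ) (R : Set V) (L : List (Set V)) : Prop where
  nonem : ∀ C ∈ L, C.Nonempty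
  disj : L.Pairwise Disjoint
  cover : {v | ∃ C ∈ L, v ∈ C} = R
  diam : ∀ C ∈ L, ∀ u ∈ C, ∀ x ∈ C, edistLE G u x t
  cost : ∀ n : ℕ, ((ann G L n).ncard : ℝ) ≤ ε * (((L.getD n ∅) : Set V).ncard : ℝ)

variable {G}

lemma GoodList.eq_of_mem_both {t ε : ℝ} {R : Set V} {L : List (Set V)}
    (h : GoodList G t ε R L) {C D : Set V} (hC : C ∈ L) (hD : D ∈ L) {v : V}
    (hvC : v ∈ C) (hvD : v ∈ D) : C = D := by
  obtain ⟨p, hp, rfl⟩ := List.mem_iff_get.mp hC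
  obtain ⟨q, hq, rfl⟩ := List.mem_iff_get.mp hD
  by_contra hne
  have hpq : (p : ℕ) ≠ (q : ℕ) := fun hh => hne (by congr 1; exact Fin.ext hh)
  have hdisj := List.pairwise_iff_get.mp h.disj
  rcases lt_or_gt_of_ne hpq with h1 | h1
  · exact (hdisj p q h1).le_bot ⟨hvC, hvD⟩
  · exact (hdisj q p h1).le_bot ⟨hvD, hvC⟩

lemma GoodList.inter_X {t ε : ℝ} {R : Set V} {L : List (Set V)}
    (h : GoodList G t ε R L) {k : ℕ} (hk : k < L.length) :
    (L.get ⟨k, hk⟩ : Set V) ∩ Xset G L = ann G L k := by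
  ext v
  constructor
  · rintro ⟨hvC, p, hvp⟩
    have hplen : p < L.length := by
      by_contra hge
      have : (L.getD p ∅ : Set V) = ∅ := List.getD_eq_default _ _ (by omega)
      have h2 := hvp.1
      rw [this] at h2
      exact absurd h2 (Set.notMem_empty v)
    have hpk : p = k := by
      by_contra hne
      have h1 : v ∈ (L.get ⟨p, hplen⟩ : Set V) := by
        rw [← mem_getD_of_lt L hplen]; exact hvp.1
      have := h.eq_of_mem_both (L.get_mem _) (L.get_mem _) h1 hvC
      apply hne
      by_contra hne2
      have hdisj := List.pairwise_iff_get.mp h.disj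
      rcases lt_or_gt_of_ne hne2 with h2 | h2
      · exact (hdisj _ _ h2).le_bot ⟨h1, hvC⟩
      · exact (hdisj _ _ h2).le_bot ⟨hvC, h1⟩
    rw [← hpk]
    exact hvp
  · intro hv
    refine ⟨?_, k, hv⟩
    rw [← mem_getD_of_lt L hk]
    exact hv.1

lemma GoodList.isTS {t ε : ℝ} {L : List (Set V)}
    (h : GoodList G t ε Set.univ L) :
    IsTSPartitionR G t ε {C | C ∈ L} (Xset G L) := by
  have hcov : ∀ x : V, ∃ C ∈ L, x ∈ C := by
    intro x
    have : x ∈ {v | ∃ C ∈ L, v ∈ C} := by rw [h.cover]; trivial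
    exact this
  refine ⟨⟨?_, ?_⟩, ?_, ?_, ?_⟩
  · intro hem
    obtain ⟨v, hv⟩ := h.nonem ∅ hem
    exact hv
  · intro a
    obtain ⟨C, hC, haC⟩ := hcov a
    exact ⟨C, ⟨hC, haC⟩, fun D hD => h.eq_of_mem_both hD.1 hC hD.2 haC⟩
  · -- separation
    rintro C hC D hD hne a b ⟨haC, haX⟩ ⟨hbD, hbX⟩ wlk
    obtain ⟨p, hp, rfl⟩ := List.mem_iff_get.mp hC
    obtain ⟨q, hq, rfl⟩ := List.mem_iff_get.mp hD
    have hpq : (p : ℕ) ≠ (q : ℕ) := fun hh => hne (by congr 1; exact Fin.ext hh)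
    rcases lt_or_gt_of_ne hpq with h1 | h1
    · have hb' : b ∈ restAfter L (p : ℕ) := ⟨L.get q, get_mem_drop L h1 q.isLt, hbD⟩
      have ha' : a ∈ L.getD (p : ℕ) ∅ := by rw [mem_getD_of_lt L p.isLt]; exact haC
      obtain ⟨i, hi, hx1, hx2⟩ := walk_hits G L hcov ha' haX hb' wlk
      exact ⟨i, hi, hx1, hx2⟩
    · have ha' : a ∈ restAfter L (q : ℕ) := ⟨L.get p, get_mem_drop L h1 p.isLt, haC⟩
      have hb' : b ∈ L.getD (q : ℕ) ∅ := by rw [mem_getD_of_lt L q.isLt]; exact hbD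
      obtain ⟨i, hi, hx1, hx2⟩ := walk_hits G L hcov hb' hbX ha' wlk.reverse
      rw [SimpleGraph.Walk.length_reverse] at hi
      refine ⟨wlk.length - (i+1), by omega, ?_, ?_⟩
      · have := hx2
        rw [SimpleGraph.Walk.getVert_reverse] at this
        exact this
      · have := hx1
        rw [SimpleGraph.Walk.getVert_reverse] at this
        have heq : wlk.length - (i+1) + 1 = wlk.length - i := by omega
        rw [heq]
        exact this
  · intro C hC u hu x hx
    exact h.diam C hC u hu x hx
  · intro C hC
    obtain ⟨k, rfl⟩ := List.mem_iff_get.mp hC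
    have hXeq : (L.get k : Set V) ∩ Xset G L = ann G L (k : ℕ) := by
      have := h.inter_X (k := (k : ℕ)) k.isLt
      simpa using this
    rw [hXeq]
    have := h.cost (k : ℕ)
    rw [mem_getD_of_lt L k.isLt] at this
    simpa using this


section carve

variable [Fintype V] {ι : Type*} [Fintype ι]

lemma exists_cluster (G : SimpleGraph V) (t ε : ℝ) (w : ι → ℝ) (Ps : ι → Set (Set V))
    (hw0 : ∀ i, 0 ≤ w i) (hw1 : ∑ i, w i = 1)
    (hpart : ∀ i, w i ≠ 0 → Setoid.IsPartition (Ps i))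
    (hdiam : ∀ i, w i ≠ 0 → ∀ P ∈ Ps i, ∀ u ∈ P, ∀ x ∈ P, edistLE G u x t)
    (hpad : ∀ z : V, 1 - ε ≤
      ∑ i ∈ Finset.univ.filter (fun i => ∀ P ∈ Ps i, z ∈ P → sball G z 2 ⊆ P), w i)
    (R : Set V) (hR : R.Nonempty) :
    ∃ C' : Set V, C'.Nonempty ∧ C' ⊆ R ∧ (∀ u ∈ C', ∀ x ∈ C', edistLE G u x t) ∧
      (({v ∈ C' | ∃ u ∈ R \ C', G.edist v u ≤ 2}).ncard : ℝ) ≤ ε * (C'.ncard : ℝ) := by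
  classical
  set Bad : ι → Set V := fun i => {z | ∃ P ∈ Ps i, z ∈ P ∧ ¬ sball G z 2 ⊆ P} with hBad
  -- Step A : per-vertex bad weight is at most ε
  have stepA : ∀ z : V, ∑ i ∈ Finset.univ.filter (fun i => z ∈ Bad i), w i ≤ ε := by
    intro z
    have hsplit := Finset.sum_filter_add_sum_filter_not Finset.univ
      (fun i => ∀ P ∈ Ps i, z ∈ P → sball G z 2 ⊆ P) w
    rw [hw1] at hsplit
    have hfe : Finset.univ.filter (fun i => z ∈ Bad i) =
        Finset.univ.filter (fun i => ¬ (∀ P ∈ Ps i, z ∈ P → sball G z 2 ⊆ P)) := by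
      apply Finset.filter_congr
      intro i _
      simp only [hBad, Set.mem_setOf_eq]
      push_neg
      rfl
    rw [hfe]
    have := hpad z
    linarith
  -- Step B : a supported index with few bad vertices in R
  have hRcard : (R.ncard : ℝ) = (R.toFinset.card : ℝ) := by
    rw [Set.ncard_eq_toFinset_card']
  have stepB : ∃ i₀, w i₀ ≠ 0 ∧ ((Bad i₀ ∩ R).ncard : ℝ) ≤ ε * (R.ncard : ℝ) := by
    by_contra hcon
    push_neg at hcon
    have hcardeq : ∀ i, ((Bad i ∩ R).ncard : ℝ) =
        ∑ z ∈ R.toFinset, (if z ∈ Bad i then (1:ℝ) else 0) := by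
      intro i
      have h1 : (Bad i ∩ R).toFinset = R.toFinset.filter (fun z => z ∈ Bad i) := by
        ext z
        simp [Set.mem_toFinset, and_comm]
      rw [Set.ncard_eq_toFinset_card', h1, Finset.card_filter]
      push_cast
      rfl
    have upper : ∑ i, w i * ((Bad i ∩ R).ncard : ℝ) ≤ ε * (R.ncard : ℝ) := by
      calc ∑ i, w i * ((Bad i ∩ R).ncard : ℝ)
          = ∑ i, ∑ z ∈ R.toFinset, (if z ∈ Bad i then w i else 0) := by
            apply Finset.sum_congr rfl
            intro i _
            rw [hcardeq i, Finset.mul_sum]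
            apply Finset.sum_congr rfl
            intro z _
            by_cases h : z ∈ Bad i <;> simp [h]
        _ = ∑ z ∈ R.toFinset, ∑ i, (if z ∈ Bad i then w i else 0) := Finset.sum_comm
        _ = ∑ z ∈ R.toFinset, ∑ i ∈ Finset.univ.filter (fun i => z ∈ Bad i), w i := by
            apply Finset.sum_congr rfl
            intro z _
            rw [Finset.sum_filter]
        _ ≤ ∑ _z ∈ R.toFinset, ε := Finset.sum_le_sum (fun z _ => stepA z)
        _ = (R.toFinset.card : ℝ) * ε := by rw [Finset.sum_const, nsmul_eq_mul]
        _ = ε * (R.ncard : ℝ) := by rw [hRcard]; ring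
    have hex : ∃ i, w i ≠ 0 := by
      by_contra hall
      push_neg at hall
      rw [Finset.sum_congr rfl (fun i _ => hall i)] at hw1
      simp at hw1
    obtain ⟨i₁, hi₁⟩ := hex
    have lower : ∑ i, w i * (ε * (R.ncard : ℝ)) < ∑ i, w i * ((Bad i ∩ R).ncard : ℝ) := by
      apply Finset.sum_lt_sum
      · intro i _
        by_cases h : w i = 0
        · simp [h]
        · have hwpos : 0 < w i := lt_of_le_of_ne (hw0 i) (Ne.symm h)
          exact le_of_lt (by exact mul_lt_mul_of_pos_left (hcon i h) hwpos)
      · refine ⟨i₁, Finset.mem_univ _, ?_⟩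
        have hwpos : 0 < w i₁ := lt_of_le_of_ne (hw0 i₁) (Ne.symm hi₁)
        exact mul_lt_mul_of_pos_left (hcon i₁ hi₁) hwpos
    rw [← Finset.sum_mul, hw1, one_mul] at lower
    linarith
  obtain ⟨i₀, hi₀, hBadR⟩ := stepB
  -- Step C : pick a cluster by fiberwise counting
  have hP := hpart i₀ hi₀
  set Part : V → Set V := fun z => (hP.2 z).choose with hPartdef
  have hPart1 : ∀ z : V, Part z ∈ Ps i₀ ∧ z ∈ Part z := fun z => (hP.2 z).choose_spec.1
  have hPartU : ∀ z : V, ∀ y, y ∈ Ps i₀ ∧ z ∈ y → y = Part z := fun z => (hP.2 z).choose_spec.2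
  set Rf := R.toFinset with hRf
  set tf := Rf.image Part with htf
  set Bf := Rf.filter (fun z => z ∈ Bad i₀) with hBf
  have h1 : Rf.card = ∑ C ∈ tf, (Rf.filter (fun z => Part z = C)).card :=
    Finset.card_eq_sum_card_fiberwise (fun x hx => Finset.mem_image_of_mem _ hx)
  have h2 : Bf.card = ∑ C ∈ tf, (Bf.filter (fun z => Part z = C)).card :=
    Finset.card_eq_sum_card_fiberwise
      (fun x hx => Finset.mem_image_of_mem _ (Finset.filter_subset _ _ hx))
  have hBfcard : (Bf.card : ℝ) = ((Bad i₀ ∩ R).ncard : ℝ) := by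
    have h3 : (Bad i₀ ∩ R).toFinset = Bf := by
      ext z
      simp only [hBf, hRf, Set.mem_toFinset, Finset.mem_filter, Set.mem_inter_iff]
      tauto
    rw [Set.ncard_eq_toFinset_card', h3]
  have pigeon : ∃ C ∈ tf, ((Bf.filter (fun z => Part z = C)).card : ℝ) ≤
      ε * ((Rf.filter (fun z => Part z = C)).card : ℝ) := by
    by_contra hcon
    push_neg at hcon
    have htfne : tf.Nonempty := by
      obtain ⟨z, hz⟩ := hR
      exact ⟨Part z, Finset.mem_image_of_mem _ (Set.mem_toFinset.mpr hz)⟩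
    have hstrict : ∑ C ∈ tf, ε * ((Rf.filter (fun z => Part z = C)).card : ℝ) <
        ∑ C ∈ tf, ((Bf.filter (fun z => Part z = C)).card : ℝ) :=
      Finset.sum_lt_sum_of_nonempty htfne (fun C hC => hcon C hC)
    have hL : ∑ C ∈ tf, ε * ((Rf.filter (fun z => Part z = C)).card : ℝ) =
        ε * (Rf.card : ℝ) := by
      rw [← Finset.mul_sum]
      congr 1
      rw [h1]
      push_cast
      rfl
    have hRr : ∑ C ∈ tf, ((Bf.filter (fun z => Part z = C)).card : ℝ) = (Bf.card : ℝ) := by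
      rw [h2]
      push_cast
      rfl
    rw [hL, hRr] at hstrict
    rw [hBfcard] at hstrict
    rw [← hRcard] at hstrict
    linarith
  obtain ⟨C, hCtf, hCbound⟩ := pigeon
  have hCPs : C ∈ Ps i₀ := by
    obtain ⟨z, _, rfl⟩ := Finset.mem_image.mp hCtf
    exact (hPart1 z).1
  refine ⟨↑(Rf.filter (fun z => Part z = C)), ?_, ?_, ?_, ?_⟩
  · obtain ⟨z, hz, hPz⟩ := Finset.mem_image.mp hCtf
    exact ⟨z, by simp only [Finset.coe_filter, Set.mem_setOf_eq]; exact ⟨hz, hPz⟩⟩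
  · intro v hv
    simp only [Finset.coe_filter, Set.mem_setOf_eq, hRf, Set.mem_toFinset] at hv
    exact hv.1
  · intro u hu x hx
    simp only [Finset.coe_filter, Set.mem_setOf_eq] at hu hx
    have hu' : u ∈ C := by rw [← hu.2]; exact (hPart1 u).2
    have hx' : x ∈ C := by rw [← hx.2]; exact (hPart1 x).2
    exact hdiam i₀ hi₀ C hCPs u hu' x hx'
  · have hsub : {v ∈ (↑(Rf.filter (fun z => Part z = C)) : Set V) |
        ∃ u ∈ R \ (↑(Rf.filter (fun z => Part z = C)) : Set V), G.edist v u ≤ 2} ⊆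
        ↑(Bf.filter (fun z => Part z = C)) := by
      rintro v ⟨hvC', u, hu, hd⟩
      simp only [Finset.coe_filter, Set.mem_setOf_eq, hRf, Set.mem_toFinset] at hvC'
      obtain ⟨huR, huC'⟩ := hu
      have huC : u ∉ C := by
        intro huC
        apply huC'
        simp only [Finset.coe_filter, Set.mem_setOf_eq, hRf, Set.mem_toFinset]
        exact ⟨huR, (hPartU u C ⟨hCPs, huC⟩).symm ▸ rfl⟩
      have hvBad : v ∈ Bad i₀ := by
        simp only [hBad, Set.mem_setOf_eq]
        refine ⟨C, hCPs, ?_, ?_⟩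
        · rw [← hvC'.2]; exact (hPart1 v).2
        · intro hsub2
          apply huC
          apply hsub2
          show G.edist v u ≤ ((2:ℕ) : ℕ∞)
          simpa using hd
      simp only [Finset.coe_filter, Set.mem_setOf_eq, hBf, Finset.mem_filter, hRf,
        Set.mem_toFinset]
      exact ⟨⟨hvC'.1, hvBad⟩, hvC'.2⟩
    calc (({v ∈ (↑(Rf.filter (fun z => Part z = C)) : Set V) |
            ∃ u ∈ R \ (↑(Rf.filter (fun z => Part z = C)) : Set V), G.edist v u ≤ 2}).ncard : ℝ)
        ≤ (((↑(Bf.filter (fun z => Part z = C)) : Set V)).ncard : ℝ) := by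
          exact_mod_cast Nat.cast_le.mpr (Set.ncard_le_ncard hsub (Set.toFinite _))
      _ = ((Bf.filter (fun z => Part z = C)).card : ℝ) := by rw [Set.ncard_coe_finset]
      _ ≤ ε * ((Rf.filter (fun z => Part z = C)).card : ℝ) := hCbound
      _ = ε * (((↑(Rf.filter (fun z => Part z = C)) : Set V)).ncard : ℝ) := by
          rw [Set.ncard_coe_finset]


lemma goodList_nil (G : SimpleGraph V) (t ε : ℝ) :
    GoodList G t ε (∅ : Set V) ([] : List (Set V)) := by
  refine ⟨by simp, List.Pairwise.nil, by ext v; simp, by simp, ?_⟩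
  intro n
  have h1 : ann G [] n = ∅ := by
    apply Set.eq_empty_of_subset_empty
    intro v hv
    have := ann_subset G [] n hv
    simp at this
  rw [h1]
  simp

lemma build (G : SimpleGraph V) (t ε : ℝ) (w : ι → ℝ) (Ps : ι → Set (Set V))
    (hw0 : ∀ i, 0 ≤ w i) (hw1 : ∑ i, w i = 1)
    (hpart : ∀ i, w i ≠ 0 → Setoid.IsPartition (Ps i))
    (hdiam : ∀ i, w i ≠ 0 → ∀ P ∈ Ps i, ∀ u ∈ P, ∀ x ∈ P, edistLE G u x t)
    (hpad : ∀ z : V, 1 - ε ≤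
      ∑ i ∈ Finset.univ.filter (fun i => ∀ P ∈ Ps i, z ∈ P → sball G z 2 ⊆ P), w i) :
    ∀ n : ℕ, ∀ R : Set V, R.ncard ≤ n → ∃ L : List (Set V), GoodList G t ε R L := by
  intro n
  induction n with
  | zero =>
    intro R hn
    have : R = ∅ := by
      rw [← Set.ncard_eq_zero (Set.toFinite R)]
      omega
    exact ⟨[], this ▸ goodList_nil G t ε⟩
  | succ n ih =>
    intro R hn
    rcases R.eq_empty_or_nonempty with rfl | hR
    · exact ⟨[], goodList_nil G t ε⟩
    · obtain ⟨C', hC'ne, hC'R, hC'diam, hC'ann⟩ :=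
        exists_cluster G t ε w Ps hw0 hw1 hpart hdiam hpad R hR
      have hlt : (R \ C').ncard < R.ncard := by
        apply Set.ncard_lt_ncard _ (Set.toFinite R)
        constructor
        · exact Set.diff_subset
        · intro hsub
          obtain ⟨v, hv⟩ := hC'ne
          have := hsub (hC'R hv)
          exact this.2 hv
      obtain ⟨L', hL'⟩ := ih (R \ C') (by omega)
      have hcovL' : {v | ∃ C ∈ L', v ∈ C} = R \ C' := hL'.cover
      have hsubL' : ∀ D ∈ L', D ⊆ R \ C' := by
        intro D hD v hv
        rw [← hcovL']
        exact ⟨D, hD, hv⟩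
      refine ⟨C' :: L', ?_, ?_, ?_, ?_, ?_⟩
      · intro C hC
        rcases List.mem_cons.mp hC with rfl | hC
        · exact hC'ne
        · exact hL'.nonem C hC
      · rw [List.pairwise_cons]
        refine ⟨?_, hL'.disj⟩
        intro D hD
        exact Set.disjoint_sdiff_right.mono_right (hsubL' D hD)
      · ext v
        simp only [Set.mem_setOf_eq, List.mem_cons]
        constructor
        · rintro ⟨C, hC | hC, hvC⟩
          · exact hC'R (hC ▸ hvC)
          · exact ((hcovL' ▸ (⟨C, hC, hvC⟩ : v ∈ {v | ∃ C ∈ L', v ∈ C})) : v ∈ R \ C').1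
        · intro hvR
          by_cases hvC' : v ∈ C'
          · exact ⟨C', Or.inl rfl, hvC'⟩
          · have : v ∈ {v | ∃ C ∈ L', v ∈ C} := by
              rw [hcovL']
              exact ⟨hvR, hvC'⟩
            obtain ⟨C, hC, hvC⟩ := this
            exact ⟨C, Or.inr hC, hvC⟩
      · intro C hC
        rcases List.mem_cons.mp hC with rfl | hC
        · exact hC'diam
        · exact hL'.diam C hC
      · intro k
        cases k with
        | zero =>
          have hann0 : ann G (C' :: L') 0 = {v ∈ C' | ∃ u ∈ R \ C', G.edist v u ≤ 2} := by
            unfold ann restAfter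
            simp only [List.getD_cons_zero, List.drop_succ_cons, List.drop_zero]
            ext v
            simp only [Set.mem_setOf_eq]
            constructor
            · rintro ⟨hv, u, hu, hd⟩
              refine ⟨hv, u, ?_, hd⟩
              rw [← hcovL']
              exact hu
            · rintro ⟨hv, u, hu, hd⟩
              refine ⟨hv, ?_⟩
              have : u ∈ {v | ∃ C ∈ L', v ∈ C} := by rw [hcovL']; exact hu
              obtain ⟨D, hD, huD⟩ := this
              exact ⟨u, ⟨D, hD, huD⟩, hd⟩
          rw [hann0]
          simpa using hC'ann
        | succ k =>
          have hann : ann G (C' :: L') (k+1) = ann G L' k := by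
            unfold ann restAfter
            simp only [List.getD_cons_succ, List.drop_succ_cons]
          have hgetD : (C' :: L').getD (k+1) ∅ = L'.getD k ∅ := List.getD_cons_succ ..
          rw [hann, hgetD]
          exact hL'.cost k

end carve

end TSaux

theorem stmt11 [Fintype V] (G : SimpleGraph V) (t β : ℝ) (ht : 0 < t) (hβ : 0 < β)
    (hβt : 2 * β / t ≤ 1)
    {ι : Type*} [Fintype ι] (w : ι → ℝ) (Ps : ι → Set (Set V))
    (hw0 : ∀ i, 0 ≤ w i) (hw1 : ∑ i, w i = 1)
    (hpart : ∀ i, w i ≠ 0 → Setoid.IsPartition (Ps i))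
    (hdiam : ∀ i, w i ≠ 0 → ∀ P ∈ Ps i, ∀ u ∈ P, ∀ x ∈ P, edistLE G u x t)
    (hpad : ∀ z : V, 1 - 2 * β / t ≤
      ∑ i ∈ Finset.univ.filter (fun i => ∀ P ∈ Ps i, z ∈ P → sball G z 2 ⊆ P), w i) :
    ∃ (𝒞 : Set (Set V)) (X : Set V), IsTSPartitionR G t (2 * β / t) 𝒞 X := by
  obtain ⟨L, hL⟩ := TSaux.build G t (2 * β / t) w Ps hw0 hw1 hpart hdiam hpad
    (Set.univ : Set V).ncard Set.univ le_rfl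
  exact ⟨{C | C ∈ L}, TSaux.Xset G L, hL.isTS⟩
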